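/- arXiv:2006.02817 — 2 statements merged into one kernel-verified Lean document; each statement's English description precedes it below -/
import Mathlib

section
/- For a prime p ≥ 5, the field Q(sin(2π/p)) equals Q(cos(π/(2p))). -/
open Real

lemma cos_int_mul_mem_adjoin (x : ℝ) (n : ℤ) :
    Real.cos (n * x) ∈ IntermediateField.adjoin ℚ {Real.cos x} := by
  have h : Real.cos (n * x) = Polynomial.aeval (Real.cos x) (Polynomial.Chebyshev.T ℚ n) := by
    rw [Polynomial.aeval_def, Polynomial.eval₂_eq_eval_map, Polynomial.Chebyshev.map_T,
      Polynomial.Chebyshev.T_real_cos]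
  rw [h]
  exact IntermediateField.algebra_adjoin_le_adjoin ℚ _
    (Algebra.adjoin_singleton_eq_range_aeval ℚ (Real.cos x) ▸ ⟨Polynomial.Chebyshev.T ℚ n, rfl⟩)

theorem stmt_0 (p : ℕ) (hp : p.Prime) (h5 : 5 ≤ p) :
    IntermediateField.adjoin ℚ {Real.sin (2 * π / p)} =
      IntermediateField.adjoin ℚ {Real.cos (π / (2 * p))} := by
  have hp0 : (p : ℝ) ≠ 0 := Nat.cast_ne_zero.mpr hp.pos.ne'
  set θ : ℝ := π / (2 * p) with hθ
  have h4 : 4 ≤ p := by omega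
  -- sin (2π/p) = cos ((p-4) θ)
  have h1 : Real.sin (2 * π / p) = Real.cos (((p - 4 : ℕ) : ℝ) * θ) := by
    rw [← Real.cos_pi_div_two_sub]
    congr 1
    have : ((p - 4 : ℕ) : ℝ) = (p : ℝ) - 4 := by
      push_cast [h4]; ring
    rw [this, hθ]
    field_simp
    ring
  -- 4 p θ = 2 π
  have h4p : (4 * p : ℝ) * θ = 2 * π := by
    rw [hθ]; field_simp; ring
  clear_value θ
  clear hθ
  -- coprimality of p - 4 and 4 p
  have hodd : Odd p := hp.odd_of_ne_two (by omega)
  have hcop : Nat.Coprime (p - 4) (4 * p) := by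
    have hc4 : Nat.Coprime (p - 4) 4 := by
      have : Odd (p - 4) := by
        obtain ⟨k, hk⟩ := hodd
        exact ⟨k - 2, by omega⟩
      have h2 : Nat.Coprime (p - 4) 2 := Nat.coprime_two_right.mpr this
      have : Nat.Coprime (p - 4) (2 ^ 2) := h2.pow_right 2
      simpa using this
    have hcp : Nat.Coprime (p - 4) p := by
      rw [Nat.coprime_comm]
      rw [hp.coprime_iff_not_dvd]
      intro hdvd
      have := Nat.le_of_dvd (by omega) hdvd
      omega
    exact hc4.mul_right hcp
  obtain ⟨a, -, ha⟩ := Nat.exists_mul_mod_eq_one_of_coprime hcop (by nlinarith)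
  -- (p - 4) * a = 4 * p * k + 1
  set k := (p - 4) * a / (4 * p) with hk
  have hdiv : (p - 4) * a = 4 * p * k + 1 := by
    have h := Nat.div_add_mod ((p - 4) * a) (4 * p)
    rw [ha] at h
    exact h.symm
  -- cos θ = cos (a * ((p-4) θ))
  have h2 : Real.cos θ = Real.cos ((a : ℤ) * (((p - 4 : ℕ) : ℝ) * θ)) := by
    have hc : ((p - 4 : ℕ) : ℝ) = (p : ℝ) - 4 := by push_cast [h4]; ring
    have hcast : ((p : ℝ) - 4) * (a : ℝ) = 4 * (p : ℝ) * (k : ℝ) + 1 := by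
      calc ((p : ℝ) - 4) * (a : ℝ) = (((p - 4) * a : ℕ) : ℝ) := by
            push_cast [h4]; ring
        _ = ((4 * p * k + 1 : ℕ) : ℝ) := by rw [hdiv]
        _ = 4 * (p : ℝ) * (k : ℝ) + 1 := by push_cast; ring
    have heq : ((a : ℤ) : ℝ) * (((p - 4 : ℕ) : ℝ) * θ) = θ + (k : ℤ) * (2 * π) := by
      rw [← h4p, hc]
      push_cast
      linear_combination θ * hcast
    rw [heq, Real.cos_add_int_mul_two_pi]
  apply le_antisymm
  · rw [IntermediateField.adjoin_le_iff]
    intro x hx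
    rw [Set.mem_singleton_iff] at hx
    subst hx
    rw [h1]
    have : (((p - 4 : ℕ) : ℤ) : ℝ) = ((p - 4 : ℕ) : ℝ) := by push_cast; ring
    rw [← this]
    exact cos_int_mul_mem_adjoin θ ((p - 4 : ℕ) : ℤ)
  · rw [IntermediateField.adjoin_le_iff]
    intro x hx
    rw [Set.mem_singleton_iff] at hx
    subst hx
    rw [h2, h1]
    exact cos_int_mul_mem_adjoin (((p - 4 : ℕ) : ℝ) * θ) (a : ℤ)
end

section
/- For any embedding τ : Q(cos(2π/p)) → ℝ different from the inclusion (where p ≥ 5 is prime), one has τ(cos(2π/p)) = cos(2πl/p) for some integer l with 2 ≤ l ≤ (p-1)/2, and consequently τ(cos(2π/p) - 1 + 32/p²) < 0. -/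
set_option maxHeartbeats 1000000

open Real

lemma aux_reduce16 (p : ℕ) (hodd : p % 2 = 1) (hp5 : 5 ≤ p) (k : ℤ) :
    ∃ l : ℕ, l ≤ (p - 1) / 2 ∧ Real.cos (2 * π * k / p) = Real.cos (2 * π * l / p) := by
  have hp0 : (0:ℝ) < (p:ℝ) := by
    have : 0 < p := by omega
    exact_mod_cast this
  have hpne : (p:ℝ) ≠ 0 := ne_of_gt hp0
  have hpz : (0:ℤ) < (p:ℤ) := by exact_mod_cast (show 0 < p by omega)
  set m : ℤ := k % (p:ℤ) with hm
  have hm0 : 0 ≤ m := Int.emod_nonneg k (ne_of_gt hpz)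
  have hmp : m < p := Int.emod_lt_of_pos k hpz
  have hkr : (k:ℝ) = (p:ℝ) * ((k / (p:ℤ) : ℤ) : ℝ) + (m:ℝ) := by
    exact_mod_cast congrArg (Int.cast : ℤ → ℝ) (Int.mul_ediv_add_emod k (p:ℤ)).symm
  have h1 : Real.cos (2 * π * (k:ℝ) / p) = Real.cos (2 * π * (m:ℝ) / p) := by
    rw [show 2 * π * (k:ℝ) / p = 2 * π * (m:ℝ) / p + ((k / (p:ℤ) : ℤ) : ℝ) * (2 * π) by
      field_simp
      linear_combination hkr]
    exact Real.cos_add_int_mul_two_pi _ _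
  set m' : ℕ := m.toNat with hm'
  have hmm' : ((m' : ℕ) : ℝ) = (m : ℝ) := by exact_mod_cast Int.toNat_of_nonneg hm0
  have hm'p : m' < p := by omega
  by_cases hle : m' ≤ (p - 1) / 2
  · exact ⟨m', hle, by rw [h1, hmm']⟩
  · refine ⟨p - m', by omega, ?_⟩
    rw [h1, ← hmm']
    have hcast : ((p - m' : ℕ) : ℝ) = (p:ℝ) - (m':ℝ) := by
      push_cast [Nat.cast_sub hm'p.le]
      ring
    rw [show 2 * π * ((p - m' : ℕ):ℝ) / p = 2 * π - 2 * π * (m':ℝ) / p by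
      rw [hcast]; field_simp]
    rw [Real.cos_two_pi_sub]

theorem stmt_16 (p : ℕ) (hp : p.Prime) (h5 : 5 ≤ p)
    (F : IntermediateField ℚ ℝ) (hF : F = IntermediateField.adjoin ℚ {Real.cos (2 * π / p)})
    (c : F) (hc : (c : ℝ) = Real.cos (2 * π / p))
    (τ : F →+* ℝ) (hτ : τ ≠ F.subtype) :
    (∃ l : ℕ, 2 ≤ l ∧ l ≤ (p - 1) / 2 ∧ τ c = Real.cos (2 * π * l / p)) ∧
      τ (c - 1 + 32 / (p : F) ^ 2) < 0 := by
  have hp0 : (0:ℝ) < (p:ℝ) := by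
    have : 0 < p := by omega
    exact_mod_cast this
  have hpne : (p:ℝ) ≠ 0 := ne_of_gt hp0
  have hpodd : p % 2 = 1 := Nat.odd_iff.mp (hp.odd_of_ne_two (by omega))
  -- Step 1: the conjugate is cos(2πk/p)
  have hch : Polynomial.aeval c (Polynomial.Chebyshev.T ℚ (p : ℤ)) = 1 := by
    apply Subtype.ext
    have h1 : ((Polynomial.aeval c (Polynomial.Chebyshev.T ℚ (p : ℤ)) : F) : ℝ)
        = Polynomial.aeval ((c : F) : ℝ) (Polynomial.Chebyshev.T ℚ (p : ℤ)) :=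
      (Polynomial.aeval_algHom_apply F.val c _).symm
    rw [h1, Polynomial.Chebyshev.aeval_T, hc, Polynomial.Chebyshev.T_real_cos]
    have h2 : (p : ℝ) * (2 * π / p) = 2 * π := by field_simp
    push_cast
    rw [h2, Real.cos_two_pi]
  set x : ℝ := τ c with hx
  have hx1 : (Polynomial.Chebyshev.T ℝ (p : ℤ)).eval x = 1 := by
    have h1 := (Polynomial.aeval_algHom_apply τ.toRatAlgHom c
        (Polynomial.Chebyshev.T ℚ (p : ℤ)))
    rw [hch, map_one] at h1
    have h2 : τ.toRatAlgHom c = x := rfl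
    rw [h2, Polynomial.Chebyshev.aeval_T] at h1
    exact h1
  have hxc : (Polynomial.Chebyshev.T ℂ (p : ℤ)).eval (x : ℂ) = 1 := by
    have := Polynomial.Chebyshev.algebraMap_eval_T (R := ℝ) (R' := ℂ) x (p : ℤ)
    rw [hx1] at this
    simpa [Complex.coe_algebraMap] using this.symm
  obtain ⟨z, hz⟩ := Complex.cos_surjective (x : ℂ)
  rw [← hz, Polynomial.Chebyshev.T_complex_cos] at hxc
  obtain ⟨k, hk⟩ := Complex.cos_eq_one_iff.mp hxc
  have hpzc : (p : ℂ) ≠ 0 := by exact_mod_cast hpne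
  have hzval : z = ((2 * π * k / p : ℝ) : ℂ) := by
    have h : z = (k : ℂ) * (2 * (π:ℝ)) / (p : ℂ) := by
      rw [eq_div_iff hpzc]
      push_cast at hk ⊢
      linear_combination -hk
    rw [h]
    push_cast
    ring
  have hxk : x = Real.cos (2 * π * k / p) := by
    have : (x : ℂ) = ((Real.cos (2 * π * k / p) : ℝ) : ℂ) := by
      rw [← hz, hzval, Complex.ofReal_cos]
    exact_mod_cast this
  -- Step 2: reduce to 0 ≤ l ≤ (p-1)/2
  obtain ⟨l, hl_le, hl_eq⟩ := aux_reduce16 p hpodd h5 k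
  have hxl : x = Real.cos (2 * π * l / p) := hxk.trans hl_eq
  -- Step 3: l ≠ 0
  have hl0 : l ≠ 0 := by
    intro h0
    subst h0
    simp at hxl
    -- hxl : x = 1
    have hc1 : c = 1 := τ.injective (by rw [map_one]; exact hxl)
    rw [hc1] at hc
    have h1 : ((1 : F) : ℝ) = 1 := rfl
    rw [h1] at hc
    have h2 : (2 * π / p : ℝ) = 0 := by
      have hq : (0:ℝ) < 2 * π / p := by positivity
      have hp1 : (1:ℝ) < (p:ℝ) := by exact_mod_cast (show 1 < p by omega)
      apply (Real.cos_eq_one_iff_of_lt_of_lt ?_ ?_).mp hc.symm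
      · linarith [pi_pos]
      · rw [div_lt_iff₀ hp0]
        nlinarith [pi_pos, mul_pos pi_pos (sub_pos.mpr hp1)]
    have : (0:ℝ) < 2 * π / p := by positivity
    linarith
  -- Step 4: l ≠ 1
  have hl1 : l ≠ 1 := by
    intro h1
    subst h1
    apply hτ
    have heq : τ.toRatAlgHom = (F.subtype).toRatAlgHom := by
      apply IntermediateField.algHom_ext_of_eq_adjoin ℚ hF
      intro y hy
      have hy' : y = Real.cos (2 * π / p) := hy
      have hyc : (⟨y, hF.ge (IntermediateField.subset_adjoin _ _ hy)⟩ : F) = c :=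
        Subtype.ext (show y = (c : ℝ) by rw [hc, hy'])
      rw [hyc]
      show τ c = F.subtype c
      have : F.subtype c = Real.cos (2 * π / p) := hc
      rw [this, ← hx, hxl]
      norm_num
    exact RingHom.ext fun a => congrArg (fun g : F →ₐ[ℚ] ℝ => g a) heq
  have hl2 : 2 ≤ l := by omega
  have h2l : 2 * l ≤ p - 1 := by omega
  have h2l' : (2 * l : ℝ) ≤ (p : ℝ) - 1 := by
    have : ((2 * l : ℕ) : ℝ) ≤ ((p - 1 : ℕ) : ℝ) := by exact_mod_cast h2l
    push_cast [Nat.cast_sub (show 1 ≤ p by omega)] at this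
    linarith
  constructor
  · exact ⟨l, hl2, hl_le, hxl⟩
  -- numeric part
  have hmap : τ (c - 1 + 32 / (p : F) ^ 2) = x - 1 + 32 / (p:ℝ) ^ 2 := by
    rw [map_add, map_sub, map_one, map_div₀, map_pow, map_natCast, map_ofNat]
  rw [hmap, hxl]
  have hsin : 4 / (p:ℝ) < Real.sin (2 * π / p) := by
    have h1 : (0:ℝ) < 2 * π / p := by positivity
    have h2 : 2 * π / p < π / 2 := by
      have hp4 : (4:ℝ) < (p:ℝ) := by exact_mod_cast (show 4 < p by omega)
      rw [div_lt_div_iff₀ hp0 two_pos]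
      nlinarith [pi_pos, mul_pos pi_pos (sub_pos.mpr hp4)]
    have h3 := Real.mul_lt_sin h1 h2
    calc 4 / (p:ℝ) = 2 / π * (2 * π / p) := by
          field_simp
          ring
      _ < _ := h3
  have hcos4 : Real.cos (2 * (2 * π / p)) = 1 - 2 * Real.sin (2 * π / p) ^ 2 := by
    have h1 := Real.cos_two_mul (2 * π / p)
    have h2 := Real.sin_sq_add_cos_sq (2 * π / p)
    linarith
  have hθ : Real.cos (2 * π * l / p) ≤ Real.cos (2 * (2 * π / p)) := by
    apply Real.cos_le_cos_of_nonneg_of_le_pi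
    · positivity
    · rw [div_le_iff₀ hp0]
      have hmul := mul_le_mul_of_nonneg_left h2l' pi_pos.le
      linarith [pi_pos]
    · rw [show 2 * (2 * π / p) = 2 * π * 2 / p by ring]
      have hl2r : (2:ℝ) ≤ (l:ℝ) := by exact_mod_cast hl2
      have := mul_le_mul_of_nonneg_left hl2r (by positivity : (0:ℝ) ≤ 2 * π)
      exact div_le_div_of_nonneg_right (by linarith) hp0.le
  have h4p : (0:ℝ) < 4 / p := by positivity
  have hs2 : (4 / (p:ℝ)) ^ 2 < Real.sin (2 * π / p) ^ 2 := by
    apply pow_lt_pow_left₀ hsin h4p.le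
    norm_num
  have h16 : (4 / (p:ℝ)) ^ 2 = 16 / (p:ℝ) ^ 2 := by ring
  have h32 : (0:ℝ) < 32 / (p:ℝ)^2 := by positivity
  rw [h16] at hs2
  have h2s : 32 / (p:ℝ)^2 < 2 * Real.sin (2 * π / p) ^ 2 := by
    rw [show (32:ℝ)/(p:ℝ)^2 = 2*(16/(p:ℝ)^2) by ring]
    linarith
  linarith [hθ, hcos4, h2s]
end
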